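/- Let 0 < μ < N, λ ∈ ℝ, Σ_λ = {x₁ < λ}, R_λ the reflection across {x₁=λ}, and Γ ⊂ {x₁ = 0} measurable with λ < 0 (so Γ ⊂ Σ_λᶜ and R_λ(Γ) ⊂ Σ_λ). Let u : ℝ^N → ℝ be measurable with F(u) integrable against the Riesz kernels involved, and set u_λ(x) = u(R_λ x), v(x) = ∫_{ℝ^N \ Γ} F(u(y))/|x-y|^μ dy, v_λ(x) = v(R_λ x). Then v(x) - v_λ(x) = ∫_{Σ_λ \ R_λ(Γ)} (F(u(y)) - F(u_λ(y))) · (1/|x-y|^μ - 1/|x_λ - y|^μ) dy. -/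

import Mathlib

open MeasureTheory

/-- Reflection of the first coordinate across the hyperplane `x₁ = λ`. -/
noncomputable def reflHyp {N : ℕ} (l : ℝ) (x : EuclideanSpace ℝ (Fin N)) :
    EuclideanSpace ℝ (Fin N) :=
  WithLp.toLp 2 (fun i => if (i : ℕ) = 0 then 2 * l - x i else x i)

/-- The half space `Σ_λ = {x : x₁ < λ}`. -/
def halfSpace (N : ℕ) (hN : 1 ≤ N) (l : ℝ) : Set (EuclideanSpace ℝ (Fin N)) :=
  {x | x ⟨0, by omega⟩ < l}

/-- The linear isometry negating the first coordinate. -/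
noncomputable def negFirstLI (N : ℕ) :
    EuclideanSpace ℝ (Fin N) ≃ₗᵢ[ℝ] EuclideanSpace ℝ (Fin N) where
  toLinearEquiv :=
  { toFun := fun x => (WithLp.toLp 2 (fun i => if (i : ℕ) = 0 then -x i else x i) : EuclideanSpace ℝ (Fin N))
    invFun := fun x => (WithLp.toLp 2 (fun i => if (i : ℕ) = 0 then -x i else x i) : EuclideanSpace ℝ (Fin N))
    map_add' := by
      intro a b; ext i
      by_cases h : (i : ℕ) = 0 <;> simp [h, PiLp.add_apply] <;> ring
    map_smul' := by
      intro c a; ext i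
      by_cases h : (i : ℕ) = 0 <;> simp [h, PiLp.smul_apply, smul_eq_mul] <;> ring
    left_inv := by intro a; ext i; by_cases h : (i : ℕ) = 0 <;> simp [h]
    right_inv := by intro a; ext i; by_cases h : (i : ℕ) = 0 <;> simp [h] }
  norm_map' := by
    intro a
    rw [EuclideanSpace.norm_eq, EuclideanSpace.norm_eq]
    congr 1
    refine Finset.sum_congr rfl fun i _ => ?_
    by_cases h : (i : ℕ) = 0 <;> simp [h]

noncomputable def cVec (N : ℕ) (l : ℝ) : EuclideanSpace ℝ (Fin N) :=
  WithLp.toLp 2 (fun i => if (i : ℕ) = 0 then 2 * l else 0)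

lemma reflHyp_eq {N : ℕ} (l : ℝ) (x : EuclideanSpace ℝ (Fin N)) :
    reflHyp l x = cVec N l + negFirstLI N x := by
  ext i
  by_cases h : (i : ℕ) = 0 <;>
    simp [reflHyp, cVec, negFirstLI, PiLp.add_apply, h] <;> ring

lemma reflHyp_measurePreserving {N : ℕ} (l : ℝ) :
    MeasurePreserving (reflHyp (N := N) l) volume volume := by
  have h1 := (negFirstLI N).measurePreserving
  have h2 := measurePreserving_add_left (volume : Measure (EuclideanSpace ℝ (Fin N))) (cVec N l)
  have := h2.comp h1
  have e : reflHyp (N := N) l = (fun x => cVec N l + x) ∘ negFirstLI N :=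
    funext fun x => reflHyp_eq l x
  rw [e]
  exact this

lemma reflHyp_invol {N : ℕ} (l : ℝ) (x : EuclideanSpace ℝ (Fin N)) :
    reflHyp l (reflHyp l x) = x := by
  ext i
  by_cases h : (i : ℕ) = 0 <;> simp [reflHyp, h] <;> ring

lemma reflHyp_norm_sub {N : ℕ} (l : ℝ) (a b : EuclideanSpace ℝ (Fin N)) :
    ‖reflHyp l a - reflHyp l b‖ = ‖a - b‖ := by
  have : reflHyp l a - reflHyp l b = negFirstLI N (a - b) := by
    ext i
    by_cases h : (i : ℕ) = 0 <;>
      simp [reflHyp, negFirstLI, PiLp.sub_apply, h] <;> ring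
  rw [this, (negFirstLI N).norm_map]

lemma reflHyp_norm_cross {N : ℕ} (l : ℝ) (a b : EuclideanSpace ℝ (Fin N)) :
    ‖a - reflHyp l b‖ = ‖reflHyp l a - b‖ := by
  calc ‖a - reflHyp l b‖ = ‖reflHyp l (reflHyp l a) - reflHyp l b‖ := by
        rw [reflHyp_invol]
    _ = ‖reflHyp l a - b‖ := reflHyp_norm_sub l (reflHyp l a) b

lemma volume_coord_hyperplane {N : ℕ} (i : Fin N) (c : ℝ) :
    volume {x : EuclideanSpace ℝ (Fin N) | x i = c} = 0 := by
  have hp := EuclideanSpace.volume_preserving_symm_measurableEquiv_toLp (Fin N)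
  have hT : MeasurableSet {f : Fin N → ℝ | f i = c} := by
    exact measurableSet_eq_fun (measurable_pi_apply i) measurable_const
  have : {x : EuclideanSpace ℝ (Fin N) | x i = c}
      = (MeasurableEquiv.toLp 2 (Fin N → ℝ)).symm ⁻¹' {f : Fin N → ℝ | f i = c} := rfl
  rw [this, hp.measure_preimage hT.nullMeasurableSet]
  rw [volume_pi]
  exact Measure.pi_hyperplane (fun _ => (volume : Measure ℝ)) i c

theorem stmt_9 (N : ℕ) (hN : 1 ≤ N) (μ l : ℝ) (hμ0 : 0 < μ) (hμN : μ < N)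
    (hl : l < 0)
    (Γ : Set (EuclideanSpace ℝ (Fin N))) (hΓ : MeasurableSet Γ)
    (hΓhyp : Γ ⊆ {x | x ⟨0, by omega⟩ = (0 : ℝ)})
    (u : EuclideanSpace ℝ (Fin N) → ℝ) (F : ℝ → ℝ)
    (hu : Measurable u) (hF : Measurable F)
    (x : EuclideanSpace ℝ (Fin N))
    (v : EuclideanSpace ℝ (Fin N) → ℝ)
    (hv : ∀ z, v z = ∫ y in Γᶜ, F (u y) / ‖z - y‖ ^ μ)
    (hint1 : IntegrableOn (fun y => F (u y) / ‖x - y‖ ^ μ) Γᶜ)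
    (hint2 : IntegrableOn (fun y => F (u y) / ‖reflHyp l x - y‖ ^ μ) Γᶜ) :
    v x - v (reflHyp l x)
      = ∫ y in halfSpace N hN l \ reflHyp l '' Γ,
          (F (u y) - F (u (reflHyp l y)))
            * (1 / ‖x - y‖ ^ μ - 1 / ‖reflHyp l x - y‖ ^ μ) := by
  have hNpos : 0 < N := hN
  set i0 : Fin N := ⟨0, by omega⟩ with hi0
  set R := reflHyp (N := N) l with hRdef
  have hmp : MeasurePreserving R volume volume := reflHyp_measurePreserving l
  have hRmeas : Measurable R := hmp.measurable
  let eR : EuclideanSpace ℝ (Fin N) ≃ᵐ EuclideanSpace ℝ (Fin N) :=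
    { toFun := R, invFun := R,
      left_inv := reflHyp_invol l, right_inv := reflHyp_invol l,
      measurable_toFun := hRmeas, measurable_invFun := hRmeas }
  have hRemb : MeasurableEmbedding R := eR.measurableEmbedding
  -- null sets
  have hΓ0 : volume Γ = 0 :=
    measure_mono_null hΓhyp (volume_coord_hyperplane i0 0)
  have hRΓ0 : volume (R '' Γ) = 0 := by
    refine measure_mono_null ?_ (volume_coord_hyperplane i0 (2 * l))
    rintro y ⟨z, hz, rfl⟩
    have hz0 : z i0 = 0 := hΓhyp hz
    show (R z) i0 = 2 * l
    simp [hRdef, reflHyp, hi0, hz0]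
    exact hz0
  -- the restriction to Γᶜ is the full measure
  have hGc : (Γᶜ : Set (EuclideanSpace ℝ (Fin N))) =ᵐ[volume] Set.univ := by
    rw [MeasureTheory.ae_eq_univ, compl_compl]
    exact hΓ0
  have hrestrict : volume.restrict Γᶜ = volume := by
    rw [Measure.restrict_congr_set hGc, Measure.restrict_univ]
  have hint1' : Integrable (fun y => F (u y) / ‖x - y‖ ^ μ) volume := by
    rw [← hrestrict]; exact hint1
  have hint2' : Integrable (fun y => F (u y) / ‖R x - y‖ ^ μ) volume := by
    rw [← hrestrict]; exact hint2
  have hsub : Integrable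
      (fun y => F (u y) / ‖x - y‖ ^ μ - F (u y) / ‖R x - y‖ ^ μ) volume :=
    hint1'.sub hint2'
  have hvx : v x = ∫ y, F (u y) / ‖x - y‖ ^ μ := by
    rw [hv x, hrestrict]
  have hvRx : v (R x) = ∫ y, F (u y) / ‖R x - y‖ ^ μ := by
    rw [hv (R x), hrestrict]
  -- measurability of the half space
  have hSmeas : MeasurableSet (halfSpace N hN l) := by
    show MeasurableSet ((fun z : EuclideanSpace ℝ (Fin N) => z i0) ⁻¹' Set.Iio l)
    exact (measurable_pi_apply i0).comp (WithLp.measurable_ofLp 2 (Fin N → ℝ)) measurableSet_Iio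
  set S := halfSpace N hN l with hSdef
  -- step 1 : difference of integrals
  have step1 : v x - v (R x)
      = ∫ y, (F (u y) / ‖x - y‖ ^ μ - F (u y) / ‖R x - y‖ ^ μ) := by
    rw [hvx, hvRx, ← integral_sub hint1' hint2']
  -- step 2 : split into S and Sᶜ
  have step2 : ∫ y, (F (u y) / ‖x - y‖ ^ μ - F (u y) / ‖R x - y‖ ^ μ)
      = (∫ y in S, (F (u y) / ‖x - y‖ ^ μ - F (u y) / ‖R x - y‖ ^ μ))
        + ∫ y in Sᶜ, (F (u y) / ‖x - y‖ ^ μ - F (u y) / ‖R x - y‖ ^ μ) :=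
    (integral_add_compl hSmeas hsub).symm
  -- step 3 : reflect the integral over the complement
  have hpre : R ⁻¹' Sᶜ = {y : EuclideanSpace ℝ (Fin N) | y i0 ≤ l} := by
    ext y
    have hRy : (R y) i0 = 2 * l - y i0 := by simp [hRdef, reflHyp, hi0]
    simp only [Set.mem_preimage, Set.mem_compl_iff, hSdef, halfSpace, Set.mem_setOf_eq,
      not_lt, ← hi0, hRy]
    constructor <;> intro <;> linarith
  have step3 : (∫ y in Sᶜ, (F (u y) / ‖x - y‖ ^ μ - F (u y) / ‖R x - y‖ ^ μ))
      = ∫ y in {y : EuclideanSpace ℝ (Fin N) | y i0 ≤ l},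
          (F (u (R y)) / ‖x - R y‖ ^ μ - F (u (R y)) / ‖R x - R y‖ ^ μ) := by
    rw [← hmp.setIntegral_preimage_emb hRemb
      (fun y => F (u y) / ‖x - y‖ ^ μ - F (u y) / ‖R x - y‖ ^ μ) Sᶜ, hpre]
  have hIicIio : ({y : EuclideanSpace ℝ (Fin N) | y i0 ≤ l} : Set _) =ᵐ[volume] S := by
    rw [MeasureTheory.ae_eq_set]
    constructor
    · refine measure_mono_null (fun y hy => ?_) (volume_coord_hyperplane i0 l)
      obtain ⟨h1, h2⟩ := hy
      simp only [hSdef, halfSpace, Set.mem_setOf_eq, not_lt, ← hi0] at h1 h2 ⊢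
      linarith
    · refine measure_mono_null (fun y hy => ?_) (volume_coord_hyperplane i0 l)
      obtain ⟨h1, h2⟩ := hy
      simp only [hSdef, halfSpace, Set.mem_setOf_eq, not_le, ← hi0] at h1 h2 ⊢
      linarith
  have step4 : (∫ y in {y : EuclideanSpace ℝ (Fin N) | y i0 ≤ l},
          (F (u (R y)) / ‖x - R y‖ ^ μ - F (u (R y)) / ‖R x - R y‖ ^ μ))
      = ∫ y in S, (F (u (R y)) / ‖x - R y‖ ^ μ - F (u (R y)) / ‖R x - R y‖ ^ μ) :=
    setIntegral_congr_set hIicIio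
  -- integrability of the reflected integrand
  have hcomp : Integrable
      (fun y => F (u (R y)) / ‖x - R y‖ ^ μ - F (u (R y)) / ‖R x - R y‖ ^ μ) volume := by
    have := (hmp.integrable_comp_emb hRemb
      (g := fun y => F (u y) / ‖x - y‖ ^ μ - F (u y) / ‖R x - y‖ ^ μ)).mpr hsub
    exact this
  -- step 5 : add the two integrals over S
  have step5 : (∫ y in S, (F (u y) / ‖x - y‖ ^ μ - F (u y) / ‖R x - y‖ ^ μ))
        + (∫ y in S, (F (u (R y)) / ‖x - R y‖ ^ μ - F (u (R y)) / ‖R x - R y‖ ^ μ))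
      = ∫ y in S, ((F (u y) / ‖x - y‖ ^ μ - F (u y) / ‖R x - y‖ ^ μ)
          + (F (u (R y)) / ‖x - R y‖ ^ μ - F (u (R y)) / ‖R x - R y‖ ^ μ)) :=
    (integral_add hsub.integrableOn hcomp.integrableOn).symm
  -- step 6 : pointwise identity
  have step6 : (∫ y in S, ((F (u y) / ‖x - y‖ ^ μ - F (u y) / ‖R x - y‖ ^ μ)
          + (F (u (R y)) / ‖x - R y‖ ^ μ - F (u (R y)) / ‖R x - R y‖ ^ μ)))
      = ∫ y in S, (F (u y) - F (u (R y))) * (1 / ‖x - y‖ ^ μ - 1 / ‖R x - y‖ ^ μ) := by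
    refine integral_congr_ae (Filter.Eventually.of_forall fun y => ?_)
    beta_reduce
    rw [show ‖x - R y‖ = ‖R x - y‖ from reflHyp_norm_cross l x y,
      show ‖R x - R y‖ = ‖x - y‖ from reflHyp_norm_sub l x y]
    ring
  -- rewrite the right-hand side set
  have hdiff : (S \ R '' Γ : Set _) =ᵐ[volume] S :=
    diff_ae_eq_self.mpr (measure_mono_null Set.inter_subset_right hRΓ0)
  rw [setIntegral_congr_set hdiff, step1, step2, step3, step4, step5, step6]
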